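/- arXiv:1706.02910 — 7 statements merged into one kernel-verified Lean document; each statement's English description precedes it below -/
import Mathlib

section
/- Every sequentiable structure satisfies the right cancellation property: for all a, b, c ∈ M, if a∘c = b∘c then a = b. -/
/-- The prefix relation in a monoid: `a ≤ b` iff `∃ c, a * c = b`. -/
def pref {M : Type*} [Monoid M] (a b : M) : Prop := ∃ c, a * c = b

/-- Every sequentiable structure satisfies right cancellation. -/
theorem rightCancellation {M : Type*} [Monoid M]
    (norm : M → ℝ) (meet : M → M → M)
    (hlc : ∀ a b c : M, a * b = a * c → b = c)
    (hnn : ∀ a : M, 0 ≤ norm a)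
    (hmul : ∀ a b : M, norm (a * b) = norm a + norm b)
    (hone : norm 1 = 0)
    (hker : ∀ a : M, norm a = 0 → a = 1)
    (hm1 : ∀ a b : M, pref (meet a b) a)
    (hm2 : ∀ a b : M, pref (meet a b) b)
    (hm3 : ∀ a b c : M, pref c a → pref c b → pref c (meet a b))
    (hseq : ∀ a b c d : M, a ≠ 1 → b ≠ 1 → c ≠ 1 → d ≠ 1 →
      pref a c → pref b d → meet a b = 1 → meet c d = 1) :
    ∀ a b c : M, a * c = b * c → a = b := by
  intro a b c hac
  obtain ⟨a', ha'⟩ := hm1 a b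
  obtain ⟨b', hb'⟩ := hm2 a b
  have h1 : meet a b * (a' * c) = meet a b * (b' * c) := by
    rw [← mul_assoc, ← mul_assoc, ha', hb', hac]
  have h2 : a' * c = b' * c := hlc _ _ _ h1
  have hnab' : norm a' = norm b' := by
    have h := congrArg norm h2
    rw [hmul, hmul] at h
    linarith
  have hmeet1 : meet a' b' = 1 := by
    obtain ⟨e, he⟩ := hm3 a b (meet a b * meet a' b')
      (by obtain ⟨t, ht⟩ := hm1 a' b'; exact ⟨t, by rw [mul_assoc, ht, ha']⟩)
      (by obtain ⟨t, ht⟩ := hm2 a' b'; exact ⟨t, by rw [mul_assoc, ht, hb']⟩)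
    have hne := congrArg norm he
    rw [hmul, hmul] at hne
    have h0 := hnn (meet a' b'); have h0' := hnn e
    exact hker _ (by linarith)
  by_cases h : a' = 1
  · have hb0 : norm b' = 0 := by rw [← hnab', h, hone]
    have hb1 := hker _ hb0
    rw [h, mul_one] at ha'; rw [hb1, mul_one] at hb'
    exact ha'.symm.trans hb'
  · have hb'ne : b' ≠ 1 := fun hb1 => h (hker _ (by rw [hnab', hb1, hone]))
    have hna' : 0 < norm a' := lt_of_le_of_ne (hnn a') (fun e => h (hker _ e.symm))
    have hxne : a' * c ≠ 1 := by
      intro hx; have hx' := congrArg norm hx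
      rw [hmul, hone] at hx'
      have := hnn c; linarith
    have hyne : b' * c ≠ 1 := by rw [← h2]; exact hxne
    have hmx := hseq a' b' (a' * c) (b' * c) h hb'ne hxne hyne ⟨c, rfl⟩ ⟨c, rfl⟩ hmeet1
    obtain ⟨e, he⟩ := hm3 (a' * c) (b' * c) (a' * c) ⟨1, mul_one _⟩ ⟨1, by rw [mul_one, h2]⟩
    rw [hmx] at he
    have hne := congrArg norm he
    rw [hmul, hone, hmul] at hne
    have := hnn c; have := hnn e
    exact absurd hne (by linarith)
end

section
/- Sequentiable structures satisfy a Levi-type lemma: for all a₁, a₂, b₁, b₂ ∈ M, if a₁∘a₂ = b₁∘b₂ and ‖b₁‖ ≥ ‖a₁‖, then there exists c ∈ M with a₁∘c = b₁ and c∘b₂ = a₂. -/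
/-- Levi-type lemma for sequentiable structures. -/
theorem leviLemma {M : Type*} [Monoid M]
    (norm : M → ℝ) (meet : M → M → M)
    (hlc : ∀ a b c : M, a * b = a * c → b = c)
    (hnn : ∀ a : M, 0 ≤ norm a)
    (hmul : ∀ a b : M, norm (a * b) = norm a + norm b)
    (hone : norm 1 = 0)
    (hker : ∀ a : M, norm a = 0 → a = 1)
    (hm1 : ∀ a b : M, pref (meet a b) a)
    (hm2 : ∀ a b : M, pref (meet a b) b)
    (hm3 : ∀ a b c : M, pref c a → pref c b → pref c (meet a b))
    (hseq : ∀ a b c d : M, a ≠ 1 → b ≠ 1 → c ≠ 1 → d ≠ 1 →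
      pref a c → pref b d → meet a b = 1 → meet c d = 1)
    (a₁ a₂ b₁ b₂ : M) (heq : a₁ * a₂ = b₁ * b₂) (hnorm : norm a₁ ≤ norm b₁) :
    ∃ c : M, a₁ * c = b₁ ∧ c * b₂ = a₂ := by
  -- norm is monotone-ish: a * c = b implies norm a ≤ norm b, and norm c = 0 ⟹ c = 1
  have hnorm_one : ∀ x y : M, x * y = 1 → x = 1 ∧ y = 1 := by
    intro x y h
    have h1 : norm x + norm y = 0 := by rw [← hmul, h, hone]
    have hx : norm x = 0 := le_antisymm (by linarith [hnn y]) (hnn x)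
    have hy : norm y = 0 := by linarith
    exact ⟨hker x hx, hker y hy⟩
  set g := meet a₁ b₁ with hg
  obtain ⟨a', ha'⟩ := hm1 a₁ b₁
  obtain ⟨b', hb'⟩ := hm2 a₁ b₁
  -- a' * a₂ = b' * b₂
  have hkey : a' * a₂ = b' * b₂ := by
    apply hlc g
    rw [← mul_assoc, ← mul_assoc, ha', hb', heq]
  -- meet a' b' = 1
  have hmab : meet a' b' = 1 := by
    obtain ⟨m, hm⟩ := hm1 a' b'
    obtain ⟨m2, hm2'⟩ := hm2 a' b'
    have hpa : pref (g * meet a' b') a₁ := ⟨m, by rw [mul_assoc, hm, ha']⟩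
    have hpb : pref (g * meet a' b') b₁ := ⟨m2, by rw [mul_assoc, hm2', hb']⟩
    obtain ⟨x, hx⟩ := hm3 a₁ b₁ (g * meet a' b') hpa hpb
    rw [← hg, mul_assoc] at hx
    have : meet a' b' * x = 1 := hlc g _ _ (by rw [hx, mul_one])
    exact (hnorm_one _ _ this).1
  -- claim: a' = 1 or b' = 1
  have hcase : a' = 1 ∨ b' = 1 := by
    by_contra h
    push_neg at h
    obtain ⟨ha1, hb1⟩ := h
    set t := a' * a₂ with ht
    have ht1 : t ≠ 1 := by
      intro h1
      exact ha1 (hnorm_one _ _ h1).1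
    have htmeet : meet t t = 1 :=
      hseq a' b' t t ha1 hb1 ht1 ht1 ⟨a₂, rfl⟩ ⟨b₂, hkey.symm⟩ hmab
    obtain ⟨y, hy⟩ := hm3 t t t ⟨1, mul_one t⟩ ⟨1, mul_one t⟩
    rw [htmeet] at hy
    exact ht1 (hnorm_one _ _ hy).1
  rcases hcase with h | h
  · -- a' = 1 : a₁ = g, take c = b'
    rw [h, mul_one] at ha'
    refine ⟨b', by rw [← ha', hb'], ?_⟩
    apply hlc a₁
    rw [← hkey, h, one_mul]
  · -- b' = 1 : b₁ = g; then norm a' = 0 so a₁ = b₁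
    rw [h, mul_one] at hb'
    have hng : norm a₁ = norm g + norm a' := by rw [← ha', hmul]
    have ha'0 : norm a' = 0 := by
      have h2 : norm g + norm a' ≤ norm g := by rw [← hng, hg, hb']; exact hnorm
      linarith [hnn a']
    have ha1 : a₁ = b₁ := by rw [← ha', hker a' ha'0, mul_one, hb']
    refine ⟨1, by rw [mul_one, ha1], ?_⟩
    rw [one_mul]
    apply hlc a₁
    rw [heq, ha1]
end

section
/- Let M be a sequentiable structure and f : Σ* → M a partial function with α ∈ Σ* f-essential and α ≡_{R_f} αβ. If (m₁, m₂, s) witnesses α ≡_{R_f} αβ, then m₁ ≤ m₂ in the prefix order of M. -/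
/-- If `α` is `f`-essential, `α ≡_{R_f} αβ`, and `(m₁, m₂, s)` witnesses this
equivalence, then `m₁ ≤ m₂` in the prefix order of the sequentiable structure. -/
theorem witnessPrefix {A : Type*} {M : Type*} [Monoid M]
    (norm : M → ℝ) (meet : M → M → M)
    (hlc : ∀ a b c : M, a * b = a * c → b = c)
    (hnn : ∀ a : M, 0 ≤ norm a)
    (hmul : ∀ a b : M, norm (a * b) = norm a + norm b)
    (hone : norm 1 = 0)
    (hker : ∀ a : M, norm a = 0 → a = 1)
    (hm1 : ∀ a b : M, pref (meet a b) a)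
    (hm2 : ∀ a b : M, pref (meet a b) b)
    (hm3 : ∀ a b c : M, pref c a → pref c b → pref c (meet a b))
    (hseq : ∀ a b c d : M, a ≠ 1 → b ≠ 1 → c ≠ 1 → d ≠ 1 →
      pref a c → pref b d → meet a b = 1 → meet c d = 1)
    (f : List A → Option M) (α β : List A)
    (hess : ∃ w : List A, (f (α ++ w)).isSome)
    (m₁ m₂ : M) (s : List A → Option M)
    (hdoms : ∀ w : List A, (s w).isSome ↔ (f (α ++ w)).isSome)
    (hdomeq : ∀ w : List A, (f (α ++ w)).isSome ↔ (f (α ++ β ++ w)).isSome)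
    (hw1 : ∀ (w : List A) (t : M), s w = some t → f (α ++ w) = some (m₁ * t))
    (hw2 : ∀ (w : List A) (t : M), s w = some t → f (α ++ β ++ w) = some (m₂ * t)) :
    pref m₁ m₂ := by
  classical
  obtain ⟨w₀, hw₀⟩ := hess
  -- basic norm facts
  have hmul_one : ∀ u v : M, u * v = 1 → u = 1 := by
    intro u v huv
    apply hker
    have h := hmul u v
    rw [huv, hone] at h
    have := hnn v
    have := hnn u
    linarith
  have hpos : ∀ a : M, a ≠ 1 → 0 < norm a := by
    intro a ha
    rcases lt_or_eq_of_le (hnn a) with h | h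
    · exact h
    · exact absurd (hker a h.symm) ha
  have hanti : ∀ p q : M, pref p q → pref q p → p = q := by
    intro p q ⟨u, hu⟩ ⟨v, hv⟩
    have : p * (u * v) = p * 1 := by rw [← mul_assoc, hu, hv, mul_one]
    have huv := hlc _ _ _ this
    have hu1 : u = 1 := hmul_one u v huv
    rw [← hu, hu1, mul_one]
  have hmeet_self : ∀ x : M, meet x x = x := by
    intro x
    exact hanti _ _ (hm1 x x) (hm3 x x x ⟨1, mul_one x⟩ ⟨1, mul_one x⟩)
  -- the sequence of words βⁿ ++ w₀
  let W : ℕ → List A := fun n => Nat.rec w₀ (fun _ w => β ++ w) n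
  have hWs : ∀ n, W (n+1) = β ++ W n := fun n => rfl
  have hdomW : ∀ n, (s (W n)).isSome := by
    intro n
    induction n with
    | zero => exact (hdoms w₀).mpr hw₀
    | succ n ih =>
      have h1 : (f (α ++ W n)).isSome := (hdoms _).mp ih
      have h2 : (f (α ++ β ++ W n)).isSome := (hdomeq _).mp h1
      have h3 : (f (α ++ W (n+1))).isSome := by
        rw [hWs, ← List.append_assoc]; exact h2
      exact (hdoms _).mpr h3
  let t : ℕ → M := fun n => (s (W n)).get (hdomW n)
  have hst : ∀ n, s (W n) = some (t n) := fun n => (Option.eq_some_iff_get_eq).mpr ⟨hdomW n, rfl⟩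
  have key : ∀ n, m₂ * t n = m₁ * t (n+1) := by
    intro n
    have h2 := hw2 (W n) (t n) (hst n)
    have h1 := hw1 (W (n+1)) (t (n+1)) (hst (n+1))
    rw [hWs, ← List.append_assoc] at h1
    exact Option.some.inj (h2.symm.trans h1)
  -- factor out the meet
  obtain ⟨a, ha⟩ := hm1 m₁ m₂
  obtain ⟨b, hb⟩ := hm2 m₁ m₂
  set c := meet m₁ m₂ with hc
  -- meet a b = 1
  have hmab : meet a b = 1 := by
    obtain ⟨u, hu⟩ := hm1 a b
    obtain ⟨v, hv⟩ := hm2 a b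
    have hca : pref (c * meet a b) m₁ := ⟨u, by rw [mul_assoc, hu, ha]⟩
    have hcb : pref (c * meet a b) m₂ := ⟨v, by rw [mul_assoc, hv, hb]⟩
    obtain ⟨e, he⟩ := hm3 m₁ m₂ (c * meet a b) hca hcb
    rw [mul_assoc] at he
    have : c * (meet a b * e) = c * 1 := by rw [he, mul_one]
    exact hmul_one _ _ (hlc _ _ _ this)
  -- key equation with the meet cancelled
  have key' : ∀ n, b * t n = a * t (n+1) := by
    intro n
    apply hlc c
    rw [← mul_assoc, ← mul_assoc, ha, hb, key]
  by_cases haone : a = 1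
  · exact ⟨b, by rw [← ha, haone, mul_one, hb]⟩
  · exfalso
    by_cases hbone : b = 1
    · -- t n = a * t (n+1), norms decrease forever: contradiction
      have hta : ∀ n, t n = a * t (n+1) := by
        intro n; have := key' n; rwa [hbone, one_mul] at this
      have hnormt : ∀ n, norm (t 0) = n * norm a + norm (t n) := by
        intro n
        induction n with
        | zero => simp
        | succ n ih =>
          rw [ih, hta n, hmul]
          push_cast
          ring
      have hbound : ∀ n : ℕ, (n : ℝ) * norm a ≤ norm (t 0) := by
        intro n
        have := hnormt n
        have := hnn (t n)
        linarith
      obtain ⟨n, hn⟩ := exists_nat_gt (norm (t 0) / norm a)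
      have hapos := hpos a haone
      have : norm (t 0) < n * norm a := by
        rw [div_lt_iff₀ hapos] at hn
        linarith
      linarith [hbound n]
    · -- a ≠ 1, b ≠ 1: use hseq on a*t1 = b*t0
      have h1 : a * t 1 ≠ 1 := by
        intro h
        exact haone (hmul_one a (t 1) h)
      have h0 : b * t 0 ≠ 1 := by
        intro h
        exact hbone (hmul_one b (t 0) h)
      have hmeet1 : meet (a * t 1) (b * t 0) = 1 :=
        hseq a b (a * t 1) (b * t 0) haone hbone h1 h0 ⟨t 1, rfl⟩ ⟨t 0, rfl⟩ hmab
      have heq : a * t 1 = b * t 0 := (key' 0).symm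
      rw [heq, hmeet_self] at hmeet1
      exact h0 hmeet1
end

section
/- With the hypotheses of the previous lemma, the norms satisfy ‖m₁‖ ≤ ‖m₂‖: if (m₁, m₂, s) witnesses α ≡_{R_f} αβ for an f-essential α, then for every N ≥ 1, N·(‖m₁‖ − ‖m₂‖) + ‖s(βᴺw)‖ = ‖s(w)‖ for any w with αw ∈ dom(f), and consequently ‖m₁‖ ≤ ‖m₂‖. -/
/-- `wordPow β N` is the `N`-fold concatenation `β^N`. -/
def wordPow {A : Type*} (β : List A) : ℕ → List A
  | 0 => []
  | n + 1 => β ++ wordPow β n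

/-- If `(m₁, m₂, s)` witnesses `α ≡_{R_f} αβ` for an `f`-essential `α`, then for
every `N ≥ 1` and every `w` with `αw ∈ dom f`,
`N·(‖m₁‖ − ‖m₂‖) + ‖s (βᴺ w)‖ = ‖s w‖`, and consequently `‖m₁‖ ≤ ‖m₂‖`. -/
theorem witnessNormLe {A : Type*} {M : Type*} [Monoid M]
    (norm : M → ℝ)
    (hnn : ∀ a : M, 0 ≤ norm a)
    (hmul : ∀ a b : M, norm (a * b) = norm a + norm b)
    (hone : norm 1 = 0)
    (hker : ∀ a : M, norm a = 0 → a = 1)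
    (f : List A → Option M) (α β : List A)
    (hess : ∃ w : List A, (f (α ++ w)).isSome)
    (m₁ m₂ : M) (s : List A → Option M)
    (hdoms : ∀ w : List A, (s w).isSome ↔ (f (α ++ w)).isSome)
    (hdomeq : ∀ w : List A, (f (α ++ w)).isSome ↔ (f (α ++ β ++ w)).isSome)
    (hw1 : ∀ (w : List A) (t : M), s w = some t → f (α ++ w) = some (m₁ * t))
    (hw2 : ∀ (w : List A) (t : M), s w = some t → f (α ++ β ++ w) = some (m₂ * t)) :
    (∀ N : ℕ, 1 ≤ N → ∀ (w : List A) (t tN : M),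
      s w = some t → s (wordPow β N ++ w) = some tN →
      (N : ℝ) * (norm m₁ - norm m₂) + norm tN = norm t) ∧
    norm m₁ ≤ norm m₂ := by
  -- step lemma
  have step : ∀ (w : List A) (t : M), s w = some t →
      ∃ t' : M, s (β ++ w) = some t' ∧ norm m₁ + norm t' = norm m₂ + norm t := by
    intro w t hwt
    have h1 : (f (α ++ w)).isSome := by
      rw [← hdoms]; simp [hwt]
    have h2 : (f (α ++ β ++ w)).isSome := (hdomeq w).mp h1
    have h3 : (s (β ++ w)).isSome := by
      rw [hdoms]
      rw [← List.append_assoc]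
      exact h2
    obtain ⟨t', ht'⟩ := Option.isSome_iff_exists.mp h3
    refine ⟨t', ht', ?_⟩
    have e1 : f (α ++ (β ++ w)) = some (m₁ * t') := hw1 _ _ ht'
    have e2 : f (α ++ β ++ w) = some (m₂ * t) := hw2 _ _ hwt
    rw [List.append_assoc] at e2
    rw [e1] at e2
    have : m₁ * t' = m₂ * t := by injection e2
    have := congrArg norm this
    rwa [hmul, hmul] at this
  -- main induction
  have main : ∀ N : ℕ, ∀ (w : List A) (t : M), s w = some t →
      ∃ tN : M, s (wordPow β N ++ w) = some tN ∧
        (N : ℝ) * (norm m₁ - norm m₂) + norm tN = norm t := by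
    intro N
    induction N with
    | zero =>
      intro w t hwt
      exact ⟨t, by simpa [wordPow] using hwt, by simp⟩
    | succ n ih =>
      intro w t hwt
      obtain ⟨tn, htn, hn⟩ := ih w t hwt
      obtain ⟨t', ht', he⟩ := step _ _ htn
      refine ⟨t', ?_, ?_⟩
      · rw [show wordPow β (n+1) ++ w = β ++ (wordPow β n ++ w) by
          simp [wordPow, List.append_assoc]]
        exact ht'
      · push_cast
        push_cast at hn
        linarith
  constructor
  · intro N _ w t tN hwt htN
    obtain ⟨tN', htN', he⟩ := main N w t hwt
    rw [htN] at htN'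
    have : tN = tN' := by injection htN'
    rw [this]; exact he
  · by_contra h
    push_neg at h
    obtain ⟨w, hw⟩ := hess
    have hs : (s w).isSome := (hdoms w).mpr hw
    obtain ⟨t, ht⟩ := Option.isSome_iff_exists.mp hs
    obtain ⟨N, hN⟩ := exists_nat_gt (norm t / (norm m₁ - norm m₂))
    obtain ⟨tN, _, he⟩ := main N w t ht
    have hpos : 0 < norm m₁ - norm m₂ := by linarith
    have : norm t < (N : ℝ) * (norm m₁ - norm m₂) := by
      rwa [div_lt_iff₀ hpos] at hN
    have := hnn tN
    linarith
end

section
/- Let f : Σ* → M be a partial function into a sequentiable structure and let A be a finite set of words all equivalent under R_f to a fixed word α. Then there exists a single partial function s : Σ* → M and an element m'' ∈ M such that for every β ∈ A there exists m_β ∈ M with: dom(s) = {w : αw ∈ dom(f)}, and for all w ∈ dom(s), f(βw) = m_β∘s(w) and f(αw) = m''∘s(w). -/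
section Aux

variable {M : Type*} [Monoid M]

lemma pref_refl (a : M) : pref a a := ⟨1, mul_one a⟩

lemma pref_trans {a b c : M} (h1 : pref a b) (h2 : pref b c) : pref a c := by
  obtain ⟨x, rfl⟩ := h1
  obtain ⟨y, rfl⟩ := h2
  exact ⟨x * y, (mul_assoc _ _ _).symm⟩

lemma eq_one_of_mul_eq_one (norm : M → ℝ)
    (hnn : ∀ a : M, 0 ≤ norm a)
    (hmul : ∀ a b : M, norm (a * b) = norm a + norm b)
    (hone : norm 1 = 0)
    (hker : ∀ a : M, norm a = 0 → a = 1)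
    {a b : M} (h : a * b = 1) : a = 1 := by
  apply hker
  have h1 := hmul a b
  rw [h, hone] at h1
  have := hnn a
  have := hnn b
  linarith

/-- Two left-divisors of a common element are prefix-comparable. -/
lemma pref_comparable (norm : M → ℝ) (meet : M → M → M)
    (hlc : ∀ a b c : M, a * b = a * c → b = c)
    (hnn : ∀ a : M, 0 ≤ norm a)
    (hmul : ∀ a b : M, norm (a * b) = norm a + norm b)
    (hone : norm 1 = 0)
    (hker : ∀ a : M, norm a = 0 → a = 1)
    (hm1 : ∀ a b : M, pref (meet a b) a)
    (hm2 : ∀ a b : M, pref (meet a b) b)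
    (hm3 : ∀ a b c : M, pref c a → pref c b → pref c (meet a b))
    (hseq : ∀ a b c d : M, a ≠ 1 → b ≠ 1 → c ≠ 1 → d ≠ 1 →
      pref a c → pref b d → meet a b = 1 → meet c d = 1)
    {a b v : M} (ha : pref a v) (hb : pref b v) : pref a b ∨ pref b a := by
  by_contra hcon
  push_neg at hcon
  obtain ⟨hab, hba⟩ := hcon
  obtain ⟨a', ha'⟩ := hm1 a b
  obtain ⟨b', hb'⟩ := hm2 a b
  set g := meet a b with hg
  obtain ⟨x, hx⟩ := ha
  obtain ⟨y, hy⟩ := hb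
  have ha1 : a' ≠ 1 := by
    rintro rfl
    rw [mul_one] at ha'
    exact hab (ha' ▸ hm2 a b)
  have hb1 : b' ≠ 1 := by
    rintro rfl
    rw [mul_one] at hb'
    exact hba (hb' ▸ hm1 a b)
  -- meet a' b' = 1
  have hmab : meet a' b' = 1 := by
    obtain ⟨k, hk⟩ := hm1 a' b'
    obtain ⟨l, hl⟩ := hm2 a' b'
    have p1 : pref (g * meet a' b') a := ⟨k, by rw [mul_assoc, hk, ha']⟩
    have p2 : pref (g * meet a' b') b := ⟨l, by rw [mul_assoc, hl, hb']⟩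
    obtain ⟨m, hm⟩ := hm3 a b _ p1 p2
    rw [← hg, mul_assoc] at hm
    conv_rhs at hm => rw [← mul_one g]
    have := hlc _ _ _ hm
    exact eq_one_of_mul_eq_one norm hnn hmul hone hker this
  -- v' := a' * x, and also v' = b' * y
  set v' := a' * x with hv'
  have hgv : g * v' = v := by rw [hv', ← mul_assoc, ha', hx]
  have hbv : b' * y = v' := by
    apply hlc g
    rw [hgv, ← mul_assoc, hb', hy]
  have hv1 : v' ≠ 1 := by
    intro h
    have hax : a' * x = 1 := by rw [← hv', h]
    exact ha1 (eq_one_of_mul_eq_one norm hnn hmul hone hker hax)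
  have hmeet : meet v' v' = 1 :=
    hseq a' b' v' v' ha1 hb1 hv1 hv1 ⟨x, rfl⟩ ⟨y, hbv⟩ hmab
  obtain ⟨k, hk⟩ := hm3 v' v' v' (pref_refl v') (pref_refl v')
  rw [hmeet] at hk
  exact hv1 (eq_one_of_mul_eq_one norm hnn hmul hone hker hk)

end Aux

/-- For a finite set `B` of words all `R_f`-equivalent to a fixed word `α` (each
with its own witness), there is a single partial function `s` and an element `m''`
serving as a uniform witness for all `β ∈ B`. -/
theorem uniformWitness {A : Type*} [DecidableEq A] {M : Type*} [Monoid M]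
    (norm : M → ℝ) (meet : M → M → M)
    (hlc : ∀ a b c : M, a * b = a * c → b = c)
    (hnn : ∀ a : M, 0 ≤ norm a)
    (hmul : ∀ a b : M, norm (a * b) = norm a + norm b)
    (hone : norm 1 = 0)
    (hker : ∀ a : M, norm a = 0 → a = 1)
    (hm1 : ∀ a b : M, pref (meet a b) a)
    (hm2 : ∀ a b : M, pref (meet a b) b)
    (hm3 : ∀ a b c : M, pref c a → pref c b → pref c (meet a b))
    (hseq : ∀ a b c d : M, a ≠ 1 → b ≠ 1 → c ≠ 1 → d ≠ 1 →
      pref a c → pref b d → meet a b = 1 → meet c d = 1)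
    (f : List A → Option M) (α : List A) (B : Finset (List A))
    (hwit : ∀ β ∈ B, ∃ (mβ mα : M) (sβ : List A → Option M),
      (∀ w : List A, (sβ w).isSome ↔ (f (α ++ w)).isSome) ∧
      (∀ w : List A, (f (β ++ w)).isSome ↔ (f (α ++ w)).isSome) ∧
      (∀ (w : List A) (t : M), sβ w = some t →
        f (β ++ w) = some (mβ * t) ∧ f (α ++ w) = some (mα * t))) :
    ∃ (s : List A → Option M) (m'' : M),
      (∀ w : List A, (s w).isSome ↔ (f (α ++ w)).isSome) ∧
      (∀ (w : List A) (t : M), s w = some t → f (α ++ w) = some (m'' * t)) ∧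
      (∀ β ∈ B, ∃ mβ : M, ∀ (w : List A) (t : M), s w = some t →
        f (β ++ w) = some (mβ * t)) := by
  by_cases hdom : ∀ w, f (α ++ w) = none
  · refine ⟨fun _ => none, 1, ?_, ?_, ?_⟩
    · intro w; simp [hdom w]
    · intro w t h; simp at h
    · intro β _; exact ⟨1, fun w t h => by simp at h⟩
  · push_neg at hdom
    obtain ⟨w₀, hw₀⟩ := hdom
    by_cases hB : B.Nonempty
    · choose! mb ma sb h1 h2 h3 using hwit
      obtain ⟨β₀, hβ₀, hmax⟩ := B.exists_max_image (fun β => norm (ma β)) hB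
      -- value at w₀
      have hv₀ : (f (α ++ w₀)).isSome := Option.isSome_iff_ne_none.mpr hw₀
      -- each ma β is a prefix of the value of f (α ++ w₀)
      have hprefv : ∀ β ∈ B, ∃ u, f (α ++ w₀) = some (ma β * u) := by
        intro β hβ
        have hs : (sb β w₀).isSome := (h1 β hβ w₀).mpr hv₀
        obtain ⟨u, hu⟩ := Option.isSome_iff_exists.mp hs
        exact ⟨u, (h3 β hβ w₀ u hu).2⟩
      refine ⟨sb β₀, ma β₀, h1 β₀ hβ₀, fun w t h => (h3 β₀ hβ₀ w t h).2, ?_⟩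
      intro β hβ
      -- show pref (ma β) (ma β₀)
      obtain ⟨u, hu⟩ := hprefv β hβ
      obtain ⟨u₀, hu₀⟩ := hprefv β₀ hβ₀
      rw [hu₀] at hu
      have heq : ma β₀ * u₀ = ma β * u := Option.some.inj hu
      have hcomp := pref_comparable norm meet hlc hnn hmul hone hker hm1 hm2 hm3 hseq
        (a := ma β) (b := ma β₀) (v := ma β₀ * u₀) ⟨u, heq.symm⟩ ⟨u₀, rfl⟩
      have hpref : pref (ma β) (ma β₀) := by
        rcases hcomp with h | h
        · exact h
        · obtain ⟨c, hc⟩ := h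
          have hn : norm (ma β) ≤ norm (ma β₀) := hmax β hβ
          have hnc := hmul (ma β₀) c
          rw [hc] at hnc
          have hc0 : norm c = 0 := by have := hnn c; linarith
          rw [hker c hc0, mul_one] at hc
          exact hc ▸ pref_refl _
      obtain ⟨d, hd⟩ := hpref
      refine ⟨mb β * d, ?_⟩
      intro w t h
      -- f (α ++ w) = some (ma β₀ * t)
      have hfa : f (α ++ w) = some (ma β₀ * t) := (h3 β₀ hβ₀ w t h).2
      have hfs : (f (α ++ w)).isSome := hfa ▸ rfl
      have hs : (sb β w).isSome := (h1 β hβ w).mpr hfs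
      obtain ⟨u', hu'⟩ := Option.isSome_iff_exists.mp hs
      have hfa' := (h3 β hβ w u' hu').2
      have hfb := (h3 β hβ w u' hu').1
      rw [hfa] at hfa'
      have : ma β * u' = ma β * (d * t) := by
        rw [← mul_assoc, hd]
        exact (Option.some.inj hfa').symm
      have hu'' := hlc _ _ _ this
      rw [hfb, hu'', ← mul_assoc, mul_assoc (mb β) d t, ← mul_assoc]
    · refine ⟨fun w => f (α ++ w), 1, fun w => Iff.rfl, ?_, ?_⟩
      · intro w t h; simpa using h
      · intro β hβ
        exact absurd hβ (by simp [Finset.not_nonempty_iff_eq_empty.mp hB])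
end

section
/- In a sequentiable structure, if m₁∘x = m₂∘y for elements m₁, m₂, x, y ∈ M, then m₁ and m₂ are comparable in the prefix order: m₁ ≤ m₂ or m₂ ≤ m₁. -/
/-- In a sequentiable structure, elements with a common right multiple are
comparable in the prefix order. -/
theorem prefixComparable {M : Type*} [Monoid M]
    (norm : M → ℝ) (meet : M → M → M)
    (hlc : ∀ a b c : M, a * b = a * c → b = c)
    (hnn : ∀ a : M, 0 ≤ norm a)
    (hmul : ∀ a b : M, norm (a * b) = norm a + norm b)
    (hone : norm 1 = 0)
    (hker : ∀ a : M, norm a = 0 → a = 1)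
    (hm1 : ∀ a b : M, pref (meet a b) a)
    (hm2 : ∀ a b : M, pref (meet a b) b)
    (hm3 : ∀ a b c : M, pref c a → pref c b → pref c (meet a b))
    (hseq : ∀ a b c d : M, a ≠ 1 → b ≠ 1 → c ≠ 1 → d ≠ 1 →
      pref a c → pref b d → meet a b = 1 → meet c d = 1)
    (m₁ m₂ x y : M) (h : m₁ * x = m₂ * y) :
    pref m₁ m₂ ∨ pref m₂ m₁ := by
  have hle : ∀ p q : M, pref p q → norm p ≤ norm q := by
    rintro p q ⟨c, rfl⟩
    rw [hmul]
    linarith [hnn c]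
  obtain ⟨a, ha⟩ := hm1 m₁ m₂
  obtain ⟨b, hb⟩ := hm2 m₁ m₂
  set g := meet m₁ m₂ with hg
  have hax : a * x = b * y := by
    apply hlc g
    rw [← mul_assoc, ha, ← mul_assoc, hb, h]
  by_cases ha1 : a = 1
  · left
    exact ⟨b, by rw [← ha, ha1, mul_one, hb]⟩
  by_cases hb1 : b = 1
  · right
    exact ⟨a, by rw [← hb, hb1, mul_one, ha]⟩
  -- show meet a b = 1
  obtain ⟨p, hp⟩ := hm1 a b
  obtain ⟨q, hq⟩ := hm2 a b
  have h1 : pref (g * meet a b) m₁ := ⟨p, by rw [mul_assoc, hp, ha]⟩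
  have h2 : pref (g * meet a b) m₂ := ⟨q, by rw [mul_assoc, hq, hb]⟩
  have h3 := hle _ _ (hm3 m₁ m₂ _ h1 h2)
  rw [hmul] at h3
  have hmab : meet a b = 1 := by
    apply hker
    have := hnn (meet a b)
    linarith
  -- derive contradiction
  exfalso
  set c := a * x with hc
  have hc1 : c ≠ 1 := by
    intro hc1
    apply ha1
    apply hker
    have h4 : norm a + norm x = 0 := by rw [← hmul, ← hc, hc1, hone]
    have := hnn a
    have := hnn x
    linarith
  have hcc := hseq a b c c ha1 hb1 hc1 hc1 ⟨x, rfl⟩ ⟨y, hax.symm⟩ hmab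
  obtain ⟨e, he⟩ := hm3 c c c ⟨1, mul_one c⟩ ⟨1, mul_one c⟩
  rw [hcc] at he
  apply hc1
  apply hker
  have h5 : norm c + norm e = 0 := by rw [← hmul, he, hone]
  have := hnn c
  have := hnn e
  linarith
end

section
/- Let T be a monoidal subsequential finite-state transducer and let O_T be its output function. Then the Myhill–Nerode relation of O_T has finite index, bounded by the number of states of T plus one. -/
/-- Generalized transition function of a subsequential transducer. -/
def dstar {A Q : Type*} (δ : Q → A → Option Q) : Q → List A → Option Q
  | q, [] => some q
  | q, a :: w =>
    match δ q a with
    | some q' => dstar δ q' w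
    | none => none

/-- Generalized transition output function (only meaningful where `dstar` is defined). -/
def lstar {A Q M : Type*} [Monoid M] (δ : Q → A → Option Q) (lam : Q → A → M) :
    Q → List A → M
  | _, [] => 1
  | q, a :: w =>
    match δ q a with
    | some q' => lam q a * lstar δ lam q' w
    | none => 1

/-- The output function of a monoidal subsequential finite-state transducer. -/
def OT {A Q M : Type*} [Monoid M] [DecidableEq Q]
    (q0 : Q) (F : Finset Q) (δ : Q → A → Option Q) (lam : Q → A → M)
    (iota : M) (Psi : Q → M) (w : List A) : Option M :=
  match dstar δ q0 w with
  | some q => if q ∈ F then some (iota * lstar δ lam q0 w * Psi q) else none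
  | none => none

/-- The Myhill–Nerode relation of a partial function `f : Σ* → M` into a monoid. -/
def MNRel {A M : Type*} [Monoid M] (f : List A → Option M) (u v : List A) : Prop :=
  ∃ (u' v' : M) (s : List A → Option M),
    ∀ w : List A,
      ((f (u ++ w)).isSome ↔ (f (v ++ w)).isSome) ∧
      ((s w).isSome ↔ (f (u ++ w)).isSome) ∧
      ((f (u ++ w)).isSome →
        ∃ t : M, s w = some t ∧ f (u ++ w) = some (u' * t) ∧ f (v ++ w) = some (v' * t))

lemma dstar_append {A Q : Type*} (δ : Q → A → Option Q) (q : Q) (u w : List A) :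
    dstar δ q (u ++ w) = (dstar δ q u).bind (fun p => dstar δ p w) := by
  induction u generalizing q with
  | nil => simp [dstar]
  | cons a u ih =>
    simp only [List.cons_append, dstar]
    cases δ q a with
    | some q' => exact ih q'
    | none => rfl

lemma lstar_append {A Q M : Type*} [Monoid M] (δ : Q → A → Option Q) (lam : Q → A → M)
    {q p : Q} (u : List A) (h : dstar δ q u = some p) (w : List A) :
    lstar δ lam q (u ++ w) = lstar δ lam q u * lstar δ lam p w := by
  induction u generalizing q with
  | nil =>
    simp [dstar] at h
    subst h; simp [lstar]
  | cons a u ih =>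
    simp only [List.cons_append, lstar, dstar] at *
    cases hq : δ q a with
    | some q' =>
      rw [hq] at h
      simp only at h
      show lam q a * lstar δ lam q' (u ++ w) = lam q a * lstar δ lam q' u * lstar δ lam p w
      rw [ih h, mul_assoc]
    | none => rw [hq] at h; exact absurd h (by simp)

lemma mnrel_of_dstar_eq {A : Type*} {M : Type*} [Monoid M]
    {Q : Type*} [DecidableEq Q]
    (q0 : Q) (F : Finset Q) (δ : Q → A → Option Q) (lam : Q → A → M)
    (iota : M) (Psi : Q → M) {u v : List A}
    (h : dstar δ q0 u = dstar δ q0 v) :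
    MNRel (OT q0 F δ lam iota Psi) u v := by
  cases hu : dstar δ q0 u with
  | none =>
    refine ⟨1, 1, fun _ => none, fun w => ?_⟩
    have hv := h ▸ hu
    have hOu : OT q0 F δ lam iota Psi (u ++ w) = none := by
      simp [OT, dstar_append, hu]
    have hOv : OT q0 F δ lam iota Psi (v ++ w) = none := by
      simp [OT, dstar_append, hv]
    simp [hOu, hOv]
  | some q =>
    have hv : dstar δ q0 v = some q := h ▸ hu
    refine ⟨iota * lstar δ lam q0 u, iota * lstar δ lam q0 v,
      fun w => match dstar δ q w with
        | some p => if p ∈ F then some (lstar δ lam q w * Psi p) else none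
        | none => none, fun w => ?_⟩
    have hdu : dstar δ q0 (u ++ w) = dstar δ q w := by simp [dstar_append, hu]
    have hdv : dstar δ q0 (v ++ w) = dstar δ q w := by simp [dstar_append, hv]
    cases hqw : dstar δ q w with
    | none =>
      have hOu : OT q0 F δ lam iota Psi (u ++ w) = none := by
        simp [OT, hdu, hqw]
      have hOv : OT q0 F δ lam iota Psi (v ++ w) = none := by
        simp [OT, hdv, hqw]
      simp [hOu, hOv, hqw]
    | some p =>
      by_cases hp : p ∈ F
      · have hOu : OT q0 F δ lam iota Psi (u ++ w)
            = some (iota * lstar δ lam q0 (u ++ w) * Psi p) := by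
          simp [OT, hdu, hqw, hp]
        have hOv : OT q0 F δ lam iota Psi (v ++ w)
            = some (iota * lstar δ lam q0 (v ++ w) * Psi p) := by
          simp [OT, hdv, hqw, hp]
        refine ⟨?_, ?_, ?_⟩
        · simp [hOu, hOv]
        · simp [hOu, hqw, hp]
        · intro _
          refine ⟨lstar δ lam q w * Psi p, by simp [hqw, hp], ?_, ?_⟩
          · rw [hOu, lstar_append δ lam u hu w]; simp [mul_assoc]
          · rw [hOv, lstar_append δ lam v hv w]; simp [mul_assoc]
      · have hOu : OT q0 F δ lam iota Psi (u ++ w) = none := by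
          simp [OT, hdu, hqw, hp]
        have hOv : OT q0 F δ lam iota Psi (v ++ w) = none := by
          simp [OT, hdv, hqw, hp]
        simp [hOu, hOv, hqw, hp]

/-- The Myhill–Nerode relation of the output function of a subsequential transducer
has finite index, bounded by the number of states plus one. -/
theorem transducerFiniteIndex {A : Type*} {M : Type*} [Monoid M]
    {Q : Type*} [Fintype Q] [DecidableEq Q]
    (q0 : Q) (F : Finset Q) (δ : Q → A → Option Q) (lam : Q → A → M)
    (iota : M) (Psi : Q → M) :
    Finite (Quot (MNRel (OT q0 F δ lam iota Psi))) ∧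
    Nat.card (Quot (MNRel (OT q0 F δ lam iota Psi))) ≤ Fintype.card Q + 1 := by
  classical
  set h : List A → Option Q := fun u => dstar δ q0 u with hh
  set g : Option Q → Quot (MNRel (OT q0 F δ lam iota Psi)) := fun x =>
    if hx : x ∈ Set.range h then Quot.mk _ (Classical.choose hx)
    else Quot.mk _ [] with hg
  have hsurj : Function.Surjective g := by
    intro c
    induction c using Quot.ind with
    | _ u =>
      refine ⟨h u, ?_⟩
      have hx : h u ∈ Set.range h := ⟨u, rfl⟩
      simp only [hg, dif_pos hx]
      exact Quot.sound (mnrel_of_dstar_eq q0 F δ lam iota Psi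
        (Classical.choose_spec hx))
  have hfin : Finite (Quot (MNRel (OT q0 F δ lam iota Psi))) :=
    Finite.of_surjective g hsurj
  refine ⟨hfin, ?_⟩
  calc Nat.card (Quot (MNRel (OT q0 F δ lam iota Psi)))
      ≤ Nat.card (Option Q) := Nat.card_le_card_of_surjective g hsurj
    _ = Fintype.card Q + 1 := by simp [Nat.card_eq_fintype_card]
end
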